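/- Let G_cube be the group of signed permutation matrices acting on functions on C_n = {-1,1}ⁿ. If V is a G_cube-invariant subspace of F(C_n, ℝ) with dim V < C(n,k) for some k ≤ n/2, then every f ∈ V can be written as f(x) = g(x) + (x₁x₂⋯x_n)·h(x) on C_n, where g and h are polynomials of degree at most k−1. -/

import Mathlib

/-- The hypercube `C_n = {-1,1}ⁿ`, as a type. -/
def Cube (n : ℕ) : Type := {x : Fin n → ℝ // ∀ i, x i = 1 ∨ x i = -1}

/-- The action of a signed permutation (a permutation `σ` with signs `ε`) on the
hypercube. -/
def signedAct (n : ℕ) (σ : Equiv.Perm (Fin n)) (ε : Fin n → ℝ)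
    (hε : ∀ i, ε i = 1 ∨ ε i = -1) (x : Cube n) : Cube n :=
  ⟨fun i => ε i * x.1 (σ i), by
    intro i
    rcases hε i with h | h <;> rcases x.2 (σ i) with h' | h' <;> simp [h, h']⟩

/-- A subspace of functions on the hypercube is `G_cube`-invariant if it is preserved
by all signed permutations. -/
def IsCubeInvariant (n : ℕ) (V : Submodule ℝ (Cube n → ℝ)) : Prop :=
  ∀ (σ : Equiv.Perm (Fin n)) (ε : Fin n → ℝ) (hε : ∀ i, ε i = 1 ∨ ε i = -1),
    ∀ f ∈ V, (fun x => f (signedAct n σ ε hε x)) ∈ V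

namespace CubeAux

open Finset

variable {n : ℕ}

/-- Sign vector attached to a boolean vector. -/
def Esgn (s : Fin n → Bool) : Fin n → ℝ := fun i => if s i then -1 else 1

lemma Esgn_pm (s : Fin n → Bool) (i : Fin n) : Esgn s i = 1 ∨ Esgn s i = -1 := by
  unfold Esgn; split <;> simp

lemma Esgn_mul (s t : Fin n → Bool) (i : Fin n) :
    Esgn s i * Esgn t i = Esgn (fun j => xor (s j) (t j)) i := by
  unfold Esgn; cases h : s i <;> cases h' : t i <;> simp [h, h']

lemma Esgn_sq (s : Fin n → Bool) (i : Fin n) : Esgn s i * Esgn s i = 1 := by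
  rcases Esgn_pm s i with h | h <;> rw [h] <;> norm_num

/-- The all-ones point of the cube. -/
def cubeOne (n : ℕ) : Cube n := ⟨fun _ => 1, fun _ => Or.inl rfl⟩

/-- Action of a sign vector on the cube. -/
def sAct (s : Fin n → Bool) (x : Cube n) : Cube n :=
  signedAct n (Equiv.refl _) (Esgn s) (Esgn_pm s) x

lemma sAct_apply (s : Fin n → Bool) (x : Cube n) (i : Fin n) :
    (sAct s x).1 i = Esgn s i * x.1 i := rfl

lemma sAct_sAct (s t : Fin n → Bool) (x : Cube n) :
    sAct s (sAct t x) = sAct (fun j => xor (s j) (t j)) x := by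
  apply Subtype.ext; funext i
  show Esgn s i * (Esgn t i * x.1 i) = Esgn (fun j => xor (s j) (t j)) i * x.1 i
  rw [← mul_assoc, Esgn_mul]

lemma sAct_false (x : Cube n) : sAct (fun _ => false) x = x := by
  apply Subtype.ext; funext i
  show Esgn (fun _ => false) i * x.1 i = x.1 i
  simp [Esgn]

lemma exists_sign (x : Cube n) : ∃ s : Fin n → Bool, sAct s (cubeOne n) = x := by
  classical
  refine ⟨fun i => if x.1 i = 1 then false else true, ?_⟩
  apply Subtype.ext; funext i
  show Esgn _ i * 1 = x.1 i
  rcases x.2 i with h | h <;> norm_num [Esgn, h]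

instance : Finite (Cube n) :=
  Finite.of_surjective (fun s : Fin n → Bool => sAct s (cubeOne n))
    (fun x => (exists_sign x))

/-- The character attached to a subset of coordinates. -/
def chi (S : Finset (Fin n)) : Cube n → ℝ := fun x => ∏ i ∈ S, x.1 i

lemma chi_sAct (S : Finset (Fin n)) (s : Fin n → Bool) (x : Cube n) :
    chi S (sAct s x) = (∏ i ∈ S, Esgn s i) * chi S x := by
  unfold chi
  rw [← Finset.prod_mul_distrib]
  rfl

lemma chi_one (S : Finset (Fin n)) : chi S (cubeOne n) = 1 := by
  unfold chi cubeOne; simp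

lemma chi_sign (S : Finset (Fin n)) (s : Fin n → Bool) :
    chi S (sAct s (cubeOne n)) = ∏ i ∈ S, Esgn s i := by
  rw [chi_sAct, chi_one, mul_one]

lemma sum_sign_prod (U : Finset (Fin n)) :
    ∑ s : Fin n → Bool, ∏ i ∈ U, Esgn s i = if U = ∅ then (2 : ℝ) ^ n else 0 := by
  classical
  rcases eq_or_ne U ∅ with rfl | hU
  · simp [Fintype.card_fun]
  · rw [if_neg hU]
    obtain ⟨j, hj⟩ := Finset.nonempty_iff_ne_empty.2 hU
    apply Finset.sum_ninvolution (fun s => Function.update s j (!(s j)))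
    · intro s
      have h1 : ∏ i ∈ U, Esgn (Function.update s j (!(s j))) i
          = (- Esgn s j) * ∏ i ∈ U.erase j, Esgn s i := by
        rw [← Finset.mul_prod_erase _ _ hj]
        congr 1
        · cases h : s j <;> simp [Esgn, Function.update, h]
        · apply Finset.prod_congr rfl
          intro i hi
          have : i ≠ j := Finset.ne_of_mem_erase hi
          simp [Esgn, Function.update, this]
      rw [← Finset.mul_prod_erase _ _ hj, h1]
      ring
    · intro s _
      intro h
      have := congrFun h j
      simp at this
    · intro s; exact Finset.mem_univ _
    · intro s
      funext i
      rcases eq_or_ne i j with rfl | h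
      · simp [Function.update]
      · simp [Function.update, h]

lemma prod_mul_symmDiff (e : Fin n → ℝ) (he : ∀ i, e i * e i = 1) (S T : Finset (Fin n)) :
    (∏ i ∈ S, e i) * (∏ i ∈ T, e i) = ∏ i ∈ (symmDiff S T), e i := by
  classical
  have h1 : (S ∩ T) ⊆ (S ∪ T) := Finset.inter_subset_left.trans Finset.subset_union_left
  have h2 : symmDiff S T = (S ∪ T) \ (S ∩ T) := by
    rw [symmDiff_eq_sup_sdiff_inf]; rfl
  have h3 : (∏ i ∈ S ∩ T, e i) * ∏ i ∈ S ∩ T, e i = 1 := by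
    rw [← Finset.prod_mul_distrib]
    exact Finset.prod_eq_one fun i _ => he i
  rw [← Finset.prod_union_inter, ← Finset.prod_sdiff h1, h2, mul_assoc, h3, mul_one]

/-- The Fourier coefficient, as a linear functional. -/
noncomputable def coefL (S : Finset (Fin n)) : (Cube n → ℝ) →ₗ[ℝ] ℝ :=
  ((2 : ℝ) ^ n)⁻¹ • ∑ s : Fin n → Bool,
    (∏ i ∈ S, Esgn s i) • (LinearMap.proj (sAct s (cubeOne n)) : (Cube n → ℝ) →ₗ[ℝ] ℝ)

lemma coefL_apply (S : Finset (Fin n)) (f : Cube n → ℝ) :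
    coefL S f = ((2 : ℝ) ^ n)⁻¹ *
      ∑ s : Fin n → Bool, (∏ i ∈ S, Esgn s i) * f (sAct s (cubeOne n)) := by
  simp [coefL, LinearMap.sum_apply, smul_eq_mul]

lemma coefL_chi (S T : Finset (Fin n)) :
    coefL S (chi T) = if S = T then 1 else 0 := by
  classical
  rw [coefL_apply]
  have h : ∀ s : Fin n → Bool,
      (∏ i ∈ S, Esgn s i) * chi T (sAct s (cubeOne n)) = ∏ i ∈ symmDiff S T, Esgn s i := by
    intro s
    rw [chi_sign, prod_mul_symmDiff _ (Esgn_sq s)]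
  rw [Finset.sum_congr rfl fun s _ => h s, sum_sign_prod]
  have h2n : ((2 : ℝ) ^ n) ≠ 0 := by positivity
  rcases eq_or_ne S T with rfl | hST
  · rw [if_pos (show symmDiff S S = ∅ by simp), if_pos rfl]
    field_simp
  · rw [if_neg, if_neg hST, mul_zero]
    intro hc
    exact hST (symmDiff_eq_bot.1 (by simpa using hc))

lemma proj_eq (S : Finset (Fin n)) (f : Cube n → ℝ) (x : Cube n) :
    ((2 : ℝ) ^ n)⁻¹ * ∑ s : Fin n → Bool, (∏ i ∈ S, Esgn s i) * f (sAct s x)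
      = coefL S f * chi S x := by
  obtain ⟨t, rfl⟩ := exists_sign x
  rw [coefL_apply, chi_sign]
  have hinv : Function.Involutive (fun s : Fin n → Bool => fun j => xor (s j) (t j)) := by
    intro s; funext j; simp
  have key : ∑ s : Fin n → Bool, (∏ i ∈ S, Esgn s i) * f (sAct s (sAct t (cubeOne n)))
      = (∏ i ∈ S, Esgn t i) *
        ∑ u : Fin n → Bool, (∏ i ∈ S, Esgn u i) * f (sAct u (cubeOne n)) := by
    rw [Finset.mul_sum]
    apply Fintype.sum_equiv (Function.Involutive.toPerm _ hinv)
    intro u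
    show (∏ i ∈ S, Esgn u i) * f (sAct u (sAct t (cubeOne n)))
        = (∏ i ∈ S, Esgn t i) * ((∏ i ∈ S, Esgn (fun j => xor (u j) (t j)) i)
            * f (sAct (fun j => xor (u j) (t j)) (cubeOne n)))
    have h2 : ∏ i ∈ S, Esgn (fun j => xor (u j) (t j)) i
        = (∏ i ∈ S, Esgn u i) * ∏ i ∈ S, Esgn t i := by
      rw [← Finset.prod_mul_distrib]
      exact Finset.prod_congr rfl fun i _ => (Esgn_mul u t i).symm
    have ht : (∏ i ∈ S, Esgn t i) * (∏ i ∈ S, Esgn t i) = 1 := by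
      rw [← Finset.prod_mul_distrib]
      exact Finset.prod_eq_one fun i _ => Esgn_sq t i
    rw [sAct_sAct, h2]
    ring_nf
    rw [sq, ht, mul_one]
  rw [key]
  ring

lemma expansion (f : Cube n → ℝ) (x : Cube n) :
    f x = ∑ S : Finset (Fin n), coefL S f * chi S x := by
  classical
  have h1 : ∀ S : Finset (Fin n), coefL S f * chi S x
      = ((2 : ℝ) ^ n)⁻¹ * ∑ s : Fin n → Bool, (∏ i ∈ S, Esgn s i) * f (sAct s x) :=
    fun S => (proj_eq S f x).symm
  rw [Finset.sum_congr rfl fun S _ => h1 S, ← Finset.mul_sum, Finset.sum_comm]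
  have h2 : ∀ s : Fin n → Bool,
      ∑ S : Finset (Fin n), (∏ i ∈ S, Esgn s i) * f (sAct s x)
        = (∏ i : Fin n, (Esgn s i + 1)) * f (sAct s x) := by
    intro s
    rw [← Finset.sum_mul]
    congr 1
    rw [Finset.prod_add]
    rw [← Finset.powerset_univ]
    apply Finset.sum_congr rfl
    intro t _
    simp
  rw [Finset.sum_congr rfl fun s _ => h2 s]
  have h3 : ∀ s : Fin n → Bool, (∏ i : Fin n, (Esgn s i + 1)) * f (sAct s x)
      = if s = (fun _ => false) then (2 : ℝ) ^ n * f (sAct s x) else 0 := by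
    intro s
    rcases eq_or_ne s (fun _ => false) with rfl | hs
    · rw [if_pos rfl]
      congr 1
      simp [Esgn]
      norm_num
    · rw [if_neg hs]
      have : ∃ j, s j = true := by
        by_contra hc
        push_neg at hc
        exact hs (funext fun j => by simpa using hc j)
      obtain ⟨j, hj⟩ := this
      rw [Finset.prod_eq_zero (Finset.mem_univ j) (by simp [Esgn, hj]), zero_mul]
  rw [Finset.sum_congr rfl fun s _ => h3 s, Finset.sum_ite_eq' Finset.univ (fun _ => false)
    (fun s => (2 : ℝ) ^ n * f (sAct s x))]
  have h2n : ((2 : ℝ) ^ n) ≠ 0 := by positivity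
  rw [if_pos (Finset.mem_univ _), sAct_false]
  field_simp

lemma chi_li : LinearIndependent ℝ (chi (n := n)) := by
  classical
  rw [Fintype.linearIndependent_iff]
  intro a ha S
  have h1 : coefL S (∑ T : Finset (Fin n), a T • chi T) = a S := by
    rw [map_sum]
    have : ∀ T : Finset (Fin n), coefL S (a T • chi T) = a T * (if S = T then 1 else 0) := by
      intro T
      rw [map_smul, coefL_chi]
      rfl
    rw [Finset.sum_congr rfl fun T _ => this T]
    simp [Finset.sum_ite_eq]
  rw [ha, map_zero] at h1
  exact h1.symm

lemma proj_mem (V : Submodule ℝ (Cube n → ℝ)) (hV : IsCubeInvariant n V)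
    {f : Cube n → ℝ} (hf : f ∈ V) (S : Finset (Fin n)) :
    (fun x => coefL S f * chi S x) ∈ V := by
  have heq : (fun x => coefL S f * chi S x)
      = ∑ s : Fin n → Bool, (((2 : ℝ) ^ n)⁻¹ * ∏ i ∈ S, Esgn s i) •
          (fun x => f (sAct s x)) := by
    funext x
    rw [← proj_eq, Finset.mul_sum, Finset.sum_apply]
    apply Finset.sum_congr rfl
    intro s _
    simp [smul_eq_mul]
    ring
  rw [heq]
  apply Submodule.sum_mem
  intro s _
  exact Submodule.smul_mem _ _ (hV (Equiv.refl _) (Esgn s) (Esgn_pm s) f hf)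

lemma exists_perm_image {S T : Finset (Fin n)} (h : S.card = T.card) :
    ∃ σ : Equiv.Perm (Fin n), S.image σ = T := by
  classical
  have h1 : Fintype.card {x // x ∈ S} = Fintype.card {x // x ∈ T} := by
    simpa using h
  have h2 : Fintype.card {x : Fin n // ¬ x ∈ S} = Fintype.card {x : Fin n // ¬ x ∈ T} := by
    rw [Fintype.card_subtype_compl, Fintype.card_subtype_compl, h1]
  let e1 := Fintype.equivOfCardEq h1
  let e2 := Fintype.equivOfCardEq h2
  let σ : Equiv.Perm (Fin n) :=
    ((Equiv.sumCompl (· ∈ S)).symm.trans ((e1.sumCongr e2).trans (Equiv.sumCompl (· ∈ T))))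
  refine ⟨σ, ?_⟩
  have hsub : S.image σ ⊆ T := by
    intro b hb
    obtain ⟨a, ha, rfl⟩ := Finset.mem_image.1 hb
    have : σ a = (e1 ⟨a, ha⟩ : {x // x ∈ T}).1 := by
      simp only [σ, Equiv.trans_apply, Equiv.sumCompl_symm_apply_of_pos ha,
        Equiv.sumCongr_apply, Sum.map_inl, Equiv.sumCompl_apply_inl]
    rw [this]
    exact (e1 ⟨a, ha⟩).2
  apply Finset.eq_of_subset_of_card_le hsub
  rw [Finset.card_image_of_injective _ σ.injective, h]

lemma chi_comp_perm (S : Finset (Fin n)) (σ : Equiv.Perm (Fin n)) :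
    (fun x => chi S (signedAct n σ (fun _ => 1) (fun _ => Or.inl rfl) x))
      = chi (S.image σ) := by
  classical
  funext x
  unfold chi
  rw [Finset.prod_image (fun a _ b _ hab => σ.injective hab)]
  exact Finset.prod_congr rfl fun i _ => one_mul _

lemma choose_mono_half {m a b : ℕ} (hab : a ≤ b) (hb : 2 * b ≤ m) :
    m.choose a ≤ m.choose b := by
  induction b with
  | zero =>
    have : a = 0 := Nat.le_zero.1 hab
    rw [this]
  | succ b ih =>
    rcases Nat.lt_or_ge a (b + 1) with h | h
    · exact le_trans (ih (by omega) (by omega))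
        (Nat.choose_le_succ_of_lt_half_left (by omega))
    · have : a = b + 1 := le_antisymm hab h
      rw [this]

lemma choose_le_mid {m k j : ℕ} (hk : 2 * k ≤ m) (h1 : k ≤ j) (h2 : j ≤ m - k) :
    m.choose k ≤ m.choose j := by
  rcases le_or_gt (2 * j) m with h | h
  · exact choose_mono_half h1 h
  · have hjm : j ≤ m := by omega
    rw [← Nat.choose_symm hjm]
    exact choose_mono_half (by omega) (by omega)

lemma middle_coeff_zero {k : ℕ} (hk : 2 * k ≤ n) (V : Submodule ℝ (Cube n → ℝ))
    (hV : IsCubeInvariant n V) (hdim : Module.finrank ℝ V < n.choose k)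
    {f : Cube n → ℝ} (hf : f ∈ V) (S : Finset (Fin n))
    (hS1 : k ≤ S.card) (hS2 : S.card ≤ n - k) : coefL S f = 0 := by
  classical
  by_contra hc
  have h1 : (fun x => coefL S f * chi S x) ∈ V := proj_mem V hV hf S
  have h2 : chi S ∈ V := by
    have h := V.smul_mem (coefL S f)⁻¹ h1
    have heq : (coefL S f)⁻¹ • (fun x => coefL S f * chi S x) = chi S := by
      funext x
      simp [smul_eq_mul]
      field_simp
    rwa [heq] at h
  have h3 : ∀ T : Finset (Fin n), T.card = S.card → chi T ∈ V := by
    intro T hT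
    obtain ⟨σ, hσ⟩ := exists_perm_image hT.symm
    have := hV σ (fun _ => 1) (fun _ => Or.inl rfl) _ h2
    rwa [chi_comp_perm, hσ] at this
  haveI : Fintype (Cube n) := Fintype.ofFinite _
  have li : LinearIndependent ℝ
      (fun T : {T : Finset (Fin n) // T.card = S.card} => (⟨chi T.1, h3 T.1 T.2⟩ : V)) := by
    have hli : LinearIndependent ℝ
        (fun T : {T : Finset (Fin n) // T.card = S.card} => chi T.1) :=
      chi_li.comp Subtype.val Subtype.val_injective
    exact LinearIndependent.of_comp V.subtype hli
  have hcard := li.fintype_card_le_finrank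
  have hcount : Fintype.card {T : Finset (Fin n) // T.card = S.card} = n.choose S.card := by
    simp [Fintype.card_finset_len]
  rw [hcount] at hcard
  exact absurd hdim (not_lt.2 (le_trans (choose_le_mid hk hS1 hS2) hcard))

end CubeAux

open CubeAux Finset in
/-- If `V` is a `G_cube`-invariant subspace of functions on `{-1,1}ⁿ` with
`dim V < C(n,k)` for some `k ≤ n/2`, then every `f ∈ V` has the form
`f(x) = g(x) + (x₁⋯x_n)·h(x)` with `g, h` polynomials of degree at most `k - 1`. -/
theorem cube_low_dim_invariant_subspace (n k : ℕ) (hk : 2 * k ≤ n)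
    (V : Submodule ℝ (Cube n → ℝ)) (hV : IsCubeInvariant n V)
    (hdim : Module.finrank ℝ V < n.choose k) :
    ∀ f ∈ V, ∃ g h : MvPolynomial (Fin n) ℝ,
      g.totalDegree ≤ k - 1 ∧ h.totalDegree ≤ k - 1 ∧
      ∀ x : Cube n,
        f x = MvPolynomial.eval x.1 g + (∏ i, x.1 i) * MvPolynomial.eval x.1 h := by
  classical
  intro f hf
  set A : Finset (Finset (Fin n)) := Finset.univ.filter (fun S => S.card < k) with hA
  set B : Finset (Finset (Fin n)) := Finset.univ.filter (fun S => n - k < S.card) with hB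
  refine ⟨∑ S ∈ A, MvPolynomial.C (coefL S f) * ∏ i ∈ S, MvPolynomial.X i,
          ∑ S ∈ B, MvPolynomial.C (coefL S f) * ∏ i ∈ Sᶜ, MvPolynomial.X i, ?_, ?_, ?_⟩
  · refine le_trans (MvPolynomial.totalDegree_finset_sum _ _) (Finset.sup_le fun S hS => ?_)
    have hcard : S.card < k := (Finset.mem_filter.1 hS).2
    refine le_trans (MvPolynomial.totalDegree_mul _ _) ?_
    rw [MvPolynomial.totalDegree_C, zero_add]
    refine le_trans (MvPolynomial.totalDegree_finset_prod _ _) ?_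
    have : ∑ i ∈ S, (MvPolynomial.X i : MvPolynomial (Fin n) ℝ).totalDegree = S.card := by
      simp [MvPolynomial.totalDegree_X]
    rw [this]
    omega
  · refine le_trans (MvPolynomial.totalDegree_finset_sum _ _) (Finset.sup_le fun S hS => ?_)
    have hcard : n - k < S.card := (Finset.mem_filter.1 hS).2
    have hcard2 : S.card ≤ n := le_trans (Finset.card_le_univ S) (by simp)
    refine le_trans (MvPolynomial.totalDegree_mul _ _) ?_
    rw [MvPolynomial.totalDegree_C, zero_add]
    refine le_trans (MvPolynomial.totalDegree_finset_prod _ _) ?_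
    have : ∑ i ∈ Sᶜ, (MvPolynomial.X i : MvPolynomial (Fin n) ℝ).totalDegree = Sᶜ.card := by
      simp [MvPolynomial.totalDegree_X]
    rw [this, Finset.card_compl]
    simp only [Fintype.card_fin]
    omega
  · intro x
    have hx := expansion f x
    have hsplit : ∑ S : Finset (Fin n), coefL S f * chi S x
        = (∑ S ∈ A, coefL S f * chi S x) + ∑ S ∈ B, coefL S f * chi S x := by
      rw [← Finset.sum_filter_add_sum_filter_not Finset.univ (fun S => S.card < k)
        (fun S => coefL S f * chi S x)]
      congr 1
      symm
      apply Finset.sum_subset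
      · intro S hS
        simp only [hB, Finset.mem_filter, Finset.mem_univ, true_and] at hS ⊢
        omega
      · intro S hS hSB
        simp only [Finset.mem_filter, Finset.mem_univ, true_and, not_lt] at hS
        simp only [hB, Finset.mem_filter, Finset.mem_univ, true_and, not_lt] at hSB
        rw [middle_coeff_zero hk V hV hdim hf S hS hSB, zero_mul]
    have hg : MvPolynomial.eval x.1 (∑ S ∈ A, MvPolynomial.C (coefL S f) * ∏ i ∈ S, MvPolynomial.X i)
        = ∑ S ∈ A, coefL S f * chi S x := by
      rw [map_sum]
      apply Finset.sum_congr rfl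
      intro S _
      simp [chi]
    have hh : (∏ i, x.1 i) * MvPolynomial.eval x.1
          (∑ S ∈ B, MvPolynomial.C (coefL S f) * ∏ i ∈ Sᶜ, MvPolynomial.X i)
        = ∑ S ∈ B, coefL S f * chi S x := by
      rw [map_sum, Finset.mul_sum]
      apply Finset.sum_congr rfl
      intro S _
      simp only [map_mul, MvPolynomial.eval_C, map_prod, MvPolynomial.eval_X]
      have hsq : ∀ i ∈ Sᶜ, x.1 i * x.1 i = 1 := by
        intro i _
        rcases x.2 i with h | h <;> rw [h] <;> norm_num
      have hprod : (∏ i, x.1 i) * ∏ i ∈ Sᶜ, x.1 i = ∏ i ∈ S, x.1 i := by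
        rw [← Finset.prod_mul_prod_compl S x.1, mul_assoc, ← Finset.prod_mul_distrib,
          Finset.prod_congr rfl hsq, Finset.prod_const_one, mul_one]
      calc (∏ i, x.1 i) * (coefL S f * ∏ i ∈ Sᶜ, x.1 i)
          = coefL S f * ((∏ i, x.1 i) * ∏ i ∈ Sᶜ, x.1 i) := by ring
        _ = coefL S f * chi S x := by rw [hprod]; rfl
    rw [hx, hsplit, hg, hh]
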